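/- A positive affine monoid $M \subseteq \mathbb{Z}^n$ has a unique minimal system of generators, consisting exactly of its irreducible elements, and this set (the Hilbert basis) is finite. -/

import Mathlib

open scoped BigOperators

/-- The set of irreducible elements of an additive submonoid of `ℤⁿ`. -/
def irreducibles {n : ℕ} (M : AddSubmonoid (Fin n → ℤ)) : Set (Fin n → ℤ) :=
  {x | x ∈ M ∧ x ≠ 0 ∧ ∀ a ∈ M, ∀ b ∈ M, x = a + b → a = 0 ∨ b = 0}

section
variable {n : ℕ} (M : AddSubmonoid (Fin n → ℤ)) (G : Finset (Fin n → ℤ))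

/-- sums of representations lie in M -/
theorem rep_mem (hGM : ∀ g ∈ G, g ∈ M) (c : ↥G → ℕ) :
    (∑ g : ↥G, c g • (g : Fin n → ℤ)) ∈ M :=
  AddSubmonoid.sum_mem M fun g _ => AddSubmonoid.nsmul_mem M (hGM g g.2) _

/-- zero-sum-free: a representation of 0 is trivial -/
theorem rep_zero (hGM : ∀ g ∈ G, g ∈ M) (hGne : ∀ g ∈ G, g ≠ (0 : Fin n → ℤ))
    (hpos : ∀ a ∈ M, -a ∈ M → a = 0)
    (c : ↥G → ℕ) (hc : ∑ g : ↥G, c g • (g : Fin n → ℤ) = 0) : c = 0 := by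
  by_contra hc0
  obtain ⟨h, hh⟩ : ∃ h : ↥G, c h ≠ 0 := by
    by_contra hall; push_neg at hall
    exact hc0 (funext fun g => hall g)
  classical
  set c' : ↥G → ℕ := Function.update c h (c h - 1) with hc'
  have key : ∑ g : ↥G, c g • (g : Fin n → ℤ)
      = (∑ g : ↥G, c' g • (g : Fin n → ℤ)) + (h : Fin n → ℤ) := by
    rw [← Finset.add_sum_erase _ _ (Finset.mem_univ h),
        ← Finset.add_sum_erase _ (fun g : ↥G => c' g • (g : Fin n → ℤ)) (Finset.mem_univ h)]
    have he : ∀ g ∈ Finset.univ.erase h, c' g • (g : Fin n → ℤ) = c g • (g : Fin n → ℤ) := by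
      intro g hg
      rw [hc', Function.update_of_ne (Finset.ne_of_mem_erase hg)]
    rw [Finset.sum_congr rfl he]
    have : c h • (h : Fin n → ℤ) = (c h - 1) • (h : Fin n → ℤ) + (h : Fin n → ℤ) := by
      conv_lhs => rw [← Nat.sub_add_cancel (Nat.one_le_iff_ne_zero.2 hh)]
      rw [add_nsmul, one_nsmul]
    rw [hc', Function.update_self, this]
    abel
  rw [hc] at key
  have hmem : -(h : Fin n → ℤ) ∈ M := by
    rw [neg_eq_of_add_eq_zero_left key.symm]
    exact rep_mem M G hGM c'
  exact hGne h h.2 (hpos _ (hGM h h.2) hmem)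

/-- every element of the closure has a representation -/
theorem rep_exists (x : Fin n → ℤ) (hx : x ∈ AddSubmonoid.closure (G : Set (Fin n → ℤ))) :
    ∃ c : ↥G → ℕ, ∑ g : ↥G, c g • (g : Fin n → ℤ) = x := by
  classical
  induction hx using AddSubmonoid.closure_induction with
  | mem y hy =>
    refine ⟨fun g => if g = ⟨y, hy⟩ then 1 else 0, ?_⟩
    rw [Finset.sum_eq_single (⟨y, hy⟩ : ↥G)]
    · simp
    · intro b _ hb; simp [hb]
    · intro hb; exact absurd (Finset.mem_univ _) hb
  | zero => exact ⟨0, by simp⟩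
  | add a b _ _ iha ihb =>
    obtain ⟨ca, hca⟩ := iha
    obtain ⟨cb, hcb⟩ := ihb
    refine ⟨ca + cb, ?_⟩
    simp only [Pi.add_apply, add_nsmul, Finset.sum_add_distrib, hca, hcb]

/-- difference of comparable representations -/
theorem rep_sub (c c' : ↥G → ℕ) (hle : c ≤ c') :
    ∑ g : ↥G, (c' - c) g • (g : Fin n → ℤ) + ∑ g : ↥G, c g • (g : Fin n → ℤ)
      = ∑ g : ↥G, c' g • (g : Fin n → ℤ) := by
  rw [← Finset.sum_add_distrib]
  refine Finset.sum_congr rfl fun g _ => ?_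
  rw [Pi.sub_apply, ← add_nsmul, Nat.sub_add_cancel (hle g)]

/-- the set of representations of a fixed element is finite -/
theorem rep_finite (hGM : ∀ g ∈ G, g ∈ M) (hGne : ∀ g ∈ G, g ≠ (0 : Fin n → ℤ))
    (hpos : ∀ a ∈ M, -a ∈ M → a = 0) (x : Fin n → ℤ) :
    {c : ↥G → ℕ | ∑ g : ↥G, c g • (g : Fin n → ℤ) = x}.Finite := by
  by_contra hinf
  have hinf' : {c : ↥G → ℕ | ∑ g : ↥G, c g • (g : Fin n → ℤ) = x}.Infinite := hinf
  set f := hinf'.natEmbedding with hf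
  set F : ℕ → (↥G → ℕ) := fun k => (f k : ↥G → ℕ) with hF
  have hpwo : (Set.univ : Set (↥G → ℕ)).IsPWO :=
    Set.isPWO_of_wellQuasiOrderedLE Set.univ
  obtain ⟨m, k, hmk, hle⟩ := hpwo.exists_lt (f := F) (fun i => Set.mem_univ _)
  have hFm : ∑ g : ↥G, F m g • (g : Fin n → ℤ) = x := (f m).2
  have hFk : ∑ g : ↥G, F k g • (g : Fin n → ℤ) = x := (f k).2
  have hdz : ∑ g : ↥G, (F k - F m) g • (g : Fin n → ℤ) = 0 := by
    have := rep_sub G (F m) (F k) hle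
    rw [hFm, hFk] at this
    exact add_right_cancel (this.trans (zero_add x).symm)
  have hd0 := rep_zero M G hGM hGne hpos _ hdz
  have heq : F m = F k := by
    funext g
    have h1 : F k g - F m g = 0 := congrFun hd0 g
    exact le_antisymm (hle g) (Nat.sub_eq_zero_iff_le.1 h1)
  exact absurd (f.injective (Subtype.ext heq)) (Nat.ne_of_lt hmk)

/-- main induction: elements all of whose representations have length ≤ N lie in the
closure of the irreducibles -/
theorem gen_main (hGM : ∀ g ∈ G, g ∈ M) (hGne : ∀ g ∈ G, g ≠ (0 : Fin n → ℤ))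
    (hpos : ∀ a ∈ M, -a ∈ M → a = 0)
    (hclos : AddSubmonoid.closure (G : Set (Fin n → ℤ)) = M) (N : ℕ) :
    ∀ x ∈ M, (∀ c : ↥G → ℕ, ∑ g : ↥G, c g • (g : Fin n → ℤ) = x → ∑ g : ↥G, c g ≤ N) →
      x ∈ AddSubmonoid.closure (irreducibles M) := by
  induction N with
  | zero =>
    intro x hx hbound
    by_cases hx0 : x = 0
    · rw [hx0]; exact zero_mem _
    exfalso
    obtain ⟨c, hc⟩ := rep_exists G x (by rw [hclos]; exact hx)
    have h1 : 1 ≤ ∑ g : ↥G, c g := by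
      rcases Nat.eq_zero_or_pos (∑ g : ↥G, c g) with h | h
      · exfalso
        apply hx0
        have hz : c = 0 := funext fun g => Finset.sum_eq_zero_iff.1 h g (Finset.mem_univ g)
        rw [← hc, hz]; simp
      · exact h
    have := hbound c hc
    omega
  | succ N ih =>
    intro x hx hbound
    by_cases hx0 : x = 0
    · rw [hx0]; exact zero_mem _
    by_cases hirr : ∀ a ∈ M, ∀ b ∈ M, x = a + b → a = 0 ∨ b = 0
    · exact AddSubmonoid.subset_closure ⟨hx, hx0, hirr⟩
    push_neg at hirr
    obtain ⟨a, haM, b, hbM, hxab, ha0, hb0⟩ := hirr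
    obtain ⟨ca, hca⟩ := rep_exists G a (by rw [hclos]; exact haM)
    obtain ⟨cb, hcb⟩ := rep_exists G b (by rw [hclos]; exact hbM)
    have hlen : ∀ (c : ↥G → ℕ) (y : Fin n → ℤ), ∑ g : ↥G, c g • (g : Fin n → ℤ) = y →
        y ≠ 0 → 1 ≤ ∑ g : ↥G, c g := by
      intro c y hcy hy0
      rcases Nat.eq_zero_or_pos (∑ g : ↥G, c g) with h | h
      · exfalso
        apply hy0
        have hz : c = 0 := funext fun g => Finset.sum_eq_zero_iff.1 h g (Finset.mem_univ g)
        rw [← hcy, hz]; simp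
      · exact h
    have hrepadd : ∀ (c c' : ↥G → ℕ), ∑ g : ↥G, (c + c') g • (g : Fin n → ℤ)
        = ∑ g : ↥G, c g • (g : Fin n → ℤ) + ∑ g : ↥G, c' g • (g : Fin n → ℤ) := by
      intro c c'
      simp only [Pi.add_apply, add_nsmul, Finset.sum_add_distrib]
    have hsumadd : ∀ (c c' : ↥G → ℕ), ∑ g : ↥G, (c + c') g = ∑ g : ↥G, c g + ∑ g : ↥G, c' g := by
      intro c c'
      simp only [Pi.add_apply, Finset.sum_add_distrib]
    have haC : a ∈ AddSubmonoid.closure (irreducibles M) := by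
      refine ih a haM fun c hc => ?_
      have hb1 := hlen cb b hcb hb0
      have := hbound (c + cb) (by rw [hrepadd, hc, hcb, hxab])
      rw [hsumadd] at this
      omega
    have hbC : b ∈ AddSubmonoid.closure (irreducibles M) := by
      refine ih b hbM fun c hc => ?_
      have ha1 := hlen ca a hca ha0
      have := hbound (ca + c) (by rw [hrepadd, hc, hca, hxab])
      rw [hsumadd] at this
      omega
    rw [hxab]
    exact add_mem haC hbC

end

theorem irr_mem_gen {n : ℕ} (M : AddSubmonoid (Fin n → ℤ))
    (S : Set (Fin n → ℤ)) (hSM : S ⊆ (M : Set (Fin n → ℤ)))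
    (hS : AddSubmonoid.closure S = M)
    {x : Fin n → ℤ} (hx : x ∈ M) (hx0 : x ≠ 0)
    (hirr : ∀ a ∈ M, ∀ b ∈ M, x = a + b → a = 0 ∨ b = 0) : x ∈ S := by
  have hxc : x ∈ AddSubmonoid.closure S := hS ▸ hx
  obtain ⟨l, hl, hsum⟩ := AddSubmonoid.exists_list_of_mem_closure hxc
  clear hxc hx
  induction l with
  | nil => exact absurd hsum.symm hx0
  | cons a t ih =>
    have haS : a ∈ S := hl a List.mem_cons_self
    have htS : ∀ y ∈ t, y ∈ S := fun y hy => hl y (List.mem_cons_of_mem a hy)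
    have haM : a ∈ M := hSM haS
    have htM : t.sum ∈ M := AddSubmonoid.list_sum_mem M (fun y hy => hSM (htS y hy))
    rw [List.sum_cons] at hsum
    rcases hirr a haM t.sum htM hsum.symm with h0 | h0
    · rw [h0, zero_add] at hsum
      exact ih htS hsum
    · rw [h0, add_zero] at hsum
      exact hsum ▸ haS

/-- A positive affine monoid `M ⊆ ℤⁿ` has a finite Hilbert basis: the set of
irreducible elements is finite, generates `M`, and is contained in every generating set,
i.e. it is the unique minimal system of generators. -/
theorem hilbert_basis_of_positive_affine_monoid
    (n : ℕ) (M : AddSubmonoid (Fin n → ℤ)) (hfg : M.FG)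
    (hpos : ∀ a ∈ M, -a ∈ M → a = 0) :
    (irreducibles M).Finite ∧
    AddSubmonoid.closure (irreducibles M) = M ∧
    ∀ S : Set (Fin n → ℤ), S ⊆ (M : Set (Fin n → ℤ)) →
      AddSubmonoid.closure S = M → irreducibles M ⊆ S := by
  classical
  obtain ⟨T, hT⟩ := hfg
  have part3 : ∀ S : Set (Fin n → ℤ), S ⊆ (M : Set (Fin n → ℤ)) →
      AddSubmonoid.closure S = M → irreducibles M ⊆ S := by
    intro S h1 h2 x hx
    exact irr_mem_gen M S h1 h2 hx.1 hx.2.1 hx.2.2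
  have hTM : (T : Set (Fin n → ℤ)) ⊆ (M : Set (Fin n → ℤ)) := by
    intro t ht
    rw [← hT]
    exact AddSubmonoid.subset_closure ht
  have part1 : (irreducibles M).Finite :=
    Set.Finite.subset T.finite_toSet (part3 (T : Set (Fin n → ℤ)) hTM hT)
  refine ⟨part1, ?_, part3⟩
  set G : Finset (Fin n → ℤ) := T.erase 0 with hGdef
  have hGM : ∀ g ∈ G, g ∈ M := fun g hg => hTM (Finset.mem_coe.2 (Finset.mem_of_mem_erase hg))
  have hGne : ∀ g ∈ G, g ≠ (0 : Fin n → ℤ) := fun g hg => Finset.ne_of_mem_erase hg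
  have hclos : AddSubmonoid.closure (G : Set (Fin n → ℤ)) = M := by
    apply le_antisymm
    · exact (AddSubmonoid.closure_le).2 fun g hg => hGM g (Finset.mem_coe.1 hg)
    · rw [← hT]
      refine (AddSubmonoid.closure_le).2 fun t ht => ?_
      by_cases ht0 : t = (0 : Fin n → ℤ)
      · rw [ht0]; exact zero_mem _
      · exact AddSubmonoid.subset_closure
          (Finset.mem_coe.2 (Finset.mem_erase.2 ⟨ht0, Finset.mem_coe.1 ht⟩))
  apply le_antisymm
  · exact (AddSubmonoid.closure_le).2 fun x hx => hx.1
  · intro x hx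
    have hfin := rep_finite M G hGM hGne hpos x
    obtain ⟨N, hN⟩ := (hfin.image (fun c : ↥G → ℕ => ∑ g : ↥G, c g)).bddAbove
    exact gen_main M G hGM hGne hpos hclos N x hx
      fun c hc => hN (Set.mem_image_of_mem _ hc)
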